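/- Let M be a von Neumann subalgebra of R and E = (E_λ) a spectral family in R. Define (s_M E)_λ := ⋀_{μ>λ} s_M(E_μ). Then (s_M E) is a spectral family in M. -/

import Mathlib

/-- A bounded spectral family in a complete lattice `L` of projections. -/
structure SpectralFamily (L : Type*) [CompleteLattice L] where
  E : ℝ → L
  mono : Monotone E
  rightCont : ∀ l : ℝ, E l = ⨅ m : Set.Ioi l, E m.1
  eq_bot : ∃ l : ℝ, E l = ⊥
  eq_top : ∃ l : ℝ, E l = ⊤

/-- The `M`-support of a projection: `s_M(Q) = ⋀{ P ∈ M | Q ≤ P }`. -/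
noncomputable def supp {L : Type*} [CompleteLattice L] (M : Set L) (Q : L) : L :=
  sInf {p | p ∈ M ∧ Q ≤ p}

lemma supp_bot {L : Type*} [CompleteLattice L] (M : Set L) (hbot : ⊥ ∈ M) :
    supp M ⊥ = ⊥ :=
  le_antisymm (sInf_le ⟨hbot, le_rfl⟩) bot_le

lemma supp_top {L : Type*} [CompleteLattice L] (M : Set L) (htop : ⊤ ∈ M) :
    supp M ⊤ = ⊤ :=
  le_antisymm le_top (le_sInf fun _ hp => hp.2)

/-- if `M` is a complete sublattice then
`(s_M E)_λ := ⋀_{μ>λ} s_M(E_μ)` defines a spectral family in `M`. -/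
theorem supp_spectralFamily {L : Type*} [CompleteLattice L] (M : Set L)
    (hbot : ⊥ ∈ M) (htop : ⊤ ∈ M)
    (hInf : ∀ S ⊆ M, sInf S ∈ M) (hSup : ∀ S ⊆ M, sSup S ∈ M)
    (F : SpectralFamily L) :
    ∃ G : SpectralFamily L,
      (∀ l : ℝ, G.E l = ⨅ m : Set.Ioi l, supp M (F.E m.1)) ∧ ∀ l : ℝ, G.E l ∈ M := by
  set f : ℝ → L := fun l => ⨅ m : Set.Ioi l, supp M (F.E m.1) with hf
  have hmono : Monotone f := by
    intro a b hab
    exact le_iInf fun m => iInf_le_of_le ⟨m.1, lt_of_le_of_lt hab m.2⟩ le_rfl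
  refine ⟨⟨f, hmono, ?_, ?_, ?_⟩, fun l => rfl, ?_⟩
  · -- right continuity
    intro l
    apply le_antisymm
    · exact le_iInf fun m => le_iInf fun μ => iInf_le _ (⟨μ.1, Set.mem_Ioi.mpr (lt_trans (Set.mem_Ioi.mp m.2) (Set.mem_Ioi.mp μ.2))⟩ : Set.Ioi l)
    · apply le_iInf fun μ => ?_
      have hμ : l < μ.1 := μ.2
      refine iInf_le_of_le ⟨(l + μ.1) / 2, by simp [Set.mem_Ioi]; linarith⟩ ?_
      exact iInf_le_of_le ⟨μ.1, by simp [Set.mem_Ioi]; linarith⟩ le_rfl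
  · -- eq_bot
    obtain ⟨l₀, h⟩ := F.eq_bot
    refine ⟨l₀ - 1, le_antisymm ?_ bot_le⟩
    calc f (l₀ - 1) ≤ supp M (F.E l₀) := iInf_le _ (⟨l₀, by simp [Set.mem_Ioi]⟩ : Set.Ioi (l₀ - 1))
      _ = ⊥ := by rw [h, supp_bot M hbot]
  · -- eq_top
    obtain ⟨l₀, h⟩ := F.eq_top
    refine ⟨l₀, le_antisymm le_top (le_iInf fun m => ?_)⟩
    have : F.E m.1 = ⊤ := le_antisymm le_top (h ▸ F.mono (le_of_lt m.2))
    rw [this, supp_top M htop]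
  · -- membership
    intro l
    show sInf (Set.range fun m : Set.Ioi l => supp M (F.E m.1)) ∈ M
    apply hInf
    rintro _ ⟨m, rfl⟩
    exact hInf _ (fun p hp => hp.1)
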